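/- arXiv:2101.03510 — 2 statements merged into one kernel-verified Lean document; each statement's English description precedes it below -/
import Mathlib

section
/- Let T : X → Y be a lattice homomorphism between two Archimedean vector lattices X and Y, each admitting a positively homogeneous continuous function calculus (Φ on X and Ψ on Y). Then T(Φ_{(x_1,…,x_m)}(h)) = Ψ_{(Tx_1,…,Tx_m)}(h), i.e. T(h(x_1,…,x_m)) = h(Tx_1,…,Tx_m), for every m ∈ ℕ, h ∈ ℋ_m, and x_1,…,x_m ∈ X. -/
/-- A function `h : ℝ^m → ℝ` belongs to `ℋ_m` iff it is continuous and positively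
homogeneous. -/
def IsPHC {m : ℕ} (h : (Fin m → ℝ) → ℝ) : Prop :=
  Continuous h ∧ ∀ (c : ℝ), 0 ≤ c → ∀ t : Fin m → ℝ, h (c • t) = c * h t

section Aux

variable {m : ℕ}

lemma isPHC_zero : IsPHC (0 : (Fin m → ℝ) → ℝ) :=
  ⟨continuous_const, by intro c hc t; simp⟩

lemma isPHC_proj (k : Fin m) : IsPHC (fun t : Fin m → ℝ => t k) :=
  ⟨continuous_apply k, by intro c hc t; simp [Pi.smul_apply, smul_eq_mul]⟩

lemma IsPHC.add {f g : (Fin m → ℝ) → ℝ} (hf : IsPHC f) (hg : IsPHC g) :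
    IsPHC (f + g) := by
  refine ⟨hf.1.add hg.1, ?_⟩
  intro c hc t
  simp only [Pi.add_apply, hf.2 c hc t, hg.2 c hc t]
  ring

lemma IsPHC.smul (c : ℝ) {f : (Fin m → ℝ) → ℝ} (hf : IsPHC f) :
    IsPHC (c • f) := by
  refine ⟨hf.1.const_smul c, ?_⟩
  intro c' hc' t
  simp only [Pi.smul_apply, smul_eq_mul, hf.2 c' hc' t]
  ring

lemma IsPHC.sup {f g : (Fin m → ℝ) → ℝ} (hf : IsPHC f) (hg : IsPHC g) :
    IsPHC (f ⊔ g) := by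
  refine ⟨hf.1.max hg.1, ?_⟩
  intro c hc t
  simp only [Pi.sup_apply, hf.2 c hc t, hg.2 c hc t]
  exact (mul_max_of_nonneg _ _ hc).symm

lemma IsPHC.neg {f : (Fin m → ℝ) → ℝ} (hf : IsPHC f) : IsPHC (-f) := by
  have := hf.smul (-1)
  rwa [neg_one_smul] at this

lemma IsPHC.sub {f g : (Fin m → ℝ) → ℝ} (hf : IsPHC f) (hg : IsPHC g) :
    IsPHC (f - g) := by
  have := hf.add hg.neg
  rwa [← sub_eq_add_neg] at this

/-- The sub-vector-lattice of `ℋ_m` generated by the coordinate projections. -/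
inductive InLat (m : ℕ) : ((Fin m → ℝ) → ℝ) → Prop
  | zero : InLat m 0
  | proj (k : Fin m) : InLat m (fun t => t k)
  | add {f g} : InLat m f → InLat m g → InLat m (f + g)
  | smul (c : ℝ) {f} : InLat m f → InLat m (c • f)
  | sup {f g} : InLat m f → InLat m g → InLat m (f ⊔ g)

lemma InLat.isPHC {f : (Fin m → ℝ) → ℝ} (hf : InLat m f) : IsPHC f := by
  induction hf with
  | zero => exact isPHC_zero
  | proj k => exact isPHC_proj k
  | add _ _ ih1 ih2 => exact ih1.add ih2
  | smul c _ ih => exact ih.smul c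
  | sup _ _ ih1 ih2 => exact ih1.sup ih2

lemma InLat.neg {f : (Fin m → ℝ) → ℝ} (hf : InLat m f) : InLat m (-f) := by
  have := hf.smul (-1)
  rwa [neg_one_smul] at this

lemma InLat.inf {f g : (Fin m → ℝ) → ℝ} (hf : InLat m f) (hg : InLat m g) :
    InLat m (f ⊓ g) := by
  have h1 : InLat m (-((-f) ⊔ (-g))) := (hf.neg.sup hg.neg).neg
  rwa [neg_sup, neg_neg, neg_neg] at h1

lemma InLat.finsum {ι : Type*} (s : Finset ι) (f : ι → ((Fin m → ℝ) → ℝ))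
    (hf : ∀ i ∈ s, InLat m (f i)) : InLat m (fun t => ∑ i ∈ s, f i t) := by
  classical
  induction s using Finset.induction with
  | empty => convert InLat.zero (m := m) using 1; funext t; simp
  | @insert a s ha ih =>
      have e : (fun t => ∑ i ∈ insert a s, f i t)
          = f a + fun t => ∑ i ∈ s, f i t := by
        funext t
        rw [Finset.sum_insert ha]; rfl
      rw [e]
      exact (hf a (Finset.mem_insert_self _ _)).add
        (ih fun i hi => hf i (Finset.mem_insert_of_mem hi))

lemma inLat_sumAbs (m : ℕ) : InLat m (fun t => ∑ k, |t k|) := by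
  have e : ∀ k : Fin m, (fun t : Fin m → ℝ => |t k|)
      = (fun t : Fin m → ℝ => t k) ⊔ (-(fun t : Fin m → ℝ => t k)) := by
    intro k
    funext t
    simp [Pi.sup_apply, Pi.neg_apply, abs_eq_max_neg]
  apply InLat.finsum
  intro k _
  rw [e k]
  exact (InLat.proj k).sup (InLat.proj k).neg

lemma inLat_interpolate (m : ℕ) (p q : Fin m → ℝ) (hp : ‖p‖ = 1) (hq : ‖q‖ = 1)
    (a b : ℝ) (hab : p = q → a = b) :
    ∃ g, InLat m g ∧ g p = a ∧ g q = b := by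
  have hpne : p ≠ 0 := by
    intro h0
    rw [h0] at hp
    simp at hp
  obtain ⟨k, hk⟩ : ∃ k, p k ≠ 0 := by
    by_contra hcon
    push_neg at hcon
    exact hpne (funext fun k => hcon k)
  by_cases hpq : p = q
  · refine ⟨(a / p k) • (fun t : Fin m → ℝ => t k), InLat.smul _ (InLat.proj k), ?_, ?_⟩
    · simp only [Pi.smul_apply, smul_eq_mul]
      exact div_mul_cancel₀ a hk
    · rw [← hpq]
      simp only [Pi.smul_apply, smul_eq_mul]
      rw [div_mul_cancel₀ a hk]
      exact hab hpq
  · by_cases hdep : ∀ i j, p i * q j = p j * q i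
    · -- q is a multiple of p, hence q = -p
      set c : ℝ := q k / p k with hcdef
      have hc : q = c • p := by
        funext j
        have h1 := hdep j k
        simp only [Pi.smul_apply, smul_eq_mul, hcdef]
        field_simp
        linarith
      have habs : |c| = 1 := by
        have h2 : ‖q‖ = |c| * ‖p‖ := by
          rw [hc, norm_smul, Real.norm_eq_abs]
        rw [hp, hq] at h2
        linarith
      have hc1 : c = -1 := by
        rcases (abs_eq (by norm_num : (0:ℝ) ≤ 1)).mp habs with h1 | h1
        · exfalso
          apply hpq
          rw [hc, h1, one_smul]
        · exact h1
      have hqp : q = -p := by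
        rw [hc, hc1, neg_one_smul]
      have hqk : q k = -(p k) := by rw [hqp]; rfl
      by_cases hab2 : 0 ≤ a + b
      · refine ⟨((a / p k) • fun t : Fin m → ℝ => t k) ⊔ ((-b / p k) • fun t : Fin m → ℝ => t k),
          (InLat.smul _ (InLat.proj k)).sup (InLat.smul _ (InLat.proj k)), ?_, ?_⟩
        · simp only [Pi.sup_apply, Pi.smul_apply, smul_eq_mul]
          rw [div_mul_cancel₀ a hk, div_mul_cancel₀ (-b) hk]
          exact max_eq_left (by linarith)
        · simp only [Pi.sup_apply, Pi.smul_apply, smul_eq_mul, hqk]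
          rw [mul_neg, mul_neg, div_mul_cancel₀ a hk, div_mul_cancel₀ (-b) hk, neg_neg]
          exact max_eq_right (by linarith)
      · refine ⟨((a / p k) • fun t : Fin m → ℝ => t k) ⊓ ((-b / p k) • fun t : Fin m → ℝ => t k),
          (InLat.smul _ (InLat.proj k)).inf (InLat.smul _ (InLat.proj k)), ?_, ?_⟩
        · simp only [Pi.inf_apply, Pi.smul_apply, smul_eq_mul]
          rw [div_mul_cancel₀ a hk, div_mul_cancel₀ (-b) hk]
          exact min_eq_left (by linarith)
        · simp only [Pi.inf_apply, Pi.smul_apply, smul_eq_mul, hqk]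
          rw [mul_neg, mul_neg, div_mul_cancel₀ a hk, div_mul_cancel₀ (-b) hk, neg_neg]
          exact min_eq_right (by linarith)
    · push_neg at hdep
      obtain ⟨i, j, hij⟩ := hdep
      have hD : p i * q j - p j * q i ≠ 0 := sub_ne_zero.mpr hij
      refine ⟨((a * q j - b * p j) / (p i * q j - p j * q i)) • (fun t : Fin m → ℝ => t i)
          + ((b * p i - a * q i) / (p i * q j - p j * q i)) • (fun t : Fin m → ℝ => t j),
        (InLat.smul _ (InLat.proj i)).add (InLat.smul _ (InLat.proj j)), ?_, ?_⟩
      · simp only [Pi.add_apply, Pi.smul_apply, smul_eq_mul]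
        rw [div_mul_eq_mul_div, div_mul_eq_mul_div, ← add_div, div_eq_iff hD]
        ring
      · simp only [Pi.add_apply, Pi.smul_apply, smul_eq_mul]
        rw [div_mul_eq_mul_div, div_mul_eq_mul_div, ← add_div, div_eq_iff hD]
        ring

lemma isPHC_apply_zero {h : (Fin m → ℝ) → ℝ} (hh : IsPHC h) : h 0 = 0 := by
  have := hh.2 0 le_rfl 0
  simpa using this

theorem inLat_approx (m : ℕ) (h : (Fin m → ℝ) → ℝ) (hh : IsPHC h) {ε : ℝ} (hε : 0 < ε) :
    ∃ g, InLat m g ∧ ∀ t, |h t - g t| ≤ ε * ∑ k, |t k| := by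
  classical
  set S := Metric.sphere (0 : Fin m → ℝ) 1 with hS
  haveI : CompactSpace S := Metric.sphere.compactSpace _ _
  set L' : Set C(S, ℝ) :=
    {F | ∃ g, InLat m g ∧ ∀ u : S, F u = g (u : Fin m → ℝ)} with hL'
  have hne : L'.Nonempty := ⟨0, 0, InLat.zero, fun u => rfl⟩
  have hinf : ∀ F ∈ L', ∀ G ∈ L', F ⊓ G ∈ L' := by
    rintro F ⟨g1, hg1, hF⟩ G ⟨g2, hg2, hG⟩
    exact ⟨g1 ⊓ g2, hg1.inf hg2, fun u => by
      simp [ContinuousMap.inf_apply, Pi.inf_apply, hF u, hG u]⟩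
  have hsup : ∀ F ∈ L', ∀ G ∈ L', F ⊔ G ∈ L' := by
    rintro F ⟨g1, hg1, hF⟩ G ⟨g2, hg2, hG⟩
    exact ⟨g1 ⊔ g2, hg1.sup hg2, fun u => by
      simp [ContinuousMap.sup_apply, Pi.sup_apply, hF u, hG u]⟩
  have hsep : L'.SeparatesPointsStrongly := by
    intro v pS qS
    obtain ⟨g, hg, hgp, hgq⟩ := inLat_interpolate m pS qS
      (mem_sphere_zero_iff_norm.mp pS.2) (mem_sphere_zero_iff_norm.mp qS.2)
      (v pS) (v qS) (fun hpq => by rw [Subtype.ext hpq])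
    refine ⟨⟨fun u : S => g u, hg.isPHC.1.comp continuous_subtype_val⟩,
      ⟨g, hg, fun u => rfl⟩, hgp, hgq⟩
  have hcl := ContinuousMap.sublattice_closure_eq_top L' hne hinf hsup hsep
  set H : C(S, ℝ) := ⟨fun u : S => h u, hh.1.comp continuous_subtype_val⟩ with hH
  have hmem : H ∈ closure L' := by rw [hcl]; trivial
  obtain ⟨F, hFL, hdist⟩ := Metric.mem_closure_iff.mp hmem ε hε
  obtain ⟨g, hg, hFg⟩ := hFL
  refine ⟨g, hg, ?_⟩
  intro t
  by_cases ht : t = 0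
  · subst ht
    rw [isPHC_apply_zero hh, isPHC_apply_zero hg.isPHC]
    simp
  · have hc : (0:ℝ) < ‖t‖ := norm_pos_iff.mpr ht
    set u : Fin m → ℝ := ‖t‖⁻¹ • t with hu
    have hun : ‖u‖ = 1 := by
      rw [hu, norm_smul, Real.norm_eq_abs, abs_of_pos (inv_pos.mpr hc),
        inv_mul_cancel₀ (ne_of_gt hc)]
    have hut : ‖t‖ • u = t := by
      rw [hu, smul_smul, mul_inv_cancel₀ (ne_of_gt hc), one_smul]
    set uS : S := ⟨u, mem_sphere_zero_iff_norm.mpr hun⟩ with huS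
    have hlt : |h u - g u| < ε := by
      have h1 : dist (H uS) (F uS) ≤ dist H F := ContinuousMap.dist_apply_le_dist uS
      have h2 : H uS = h u := rfl
      have h3 : F uS = g u := hFg uS
      rw [Real.dist_eq, h2, h3] at h1
      exact lt_of_le_of_lt h1 hdist
    have hhu : h t = ‖t‖ * h u := by
      have h5 := hh.2 ‖t‖ hc.le u
      rwa [hut] at h5
    have hgu : g t = ‖t‖ * g u := by
      have h5 := hg.isPHC.2 ‖t‖ hc.le u
      rwa [hut] at h5
    have hnorm : ‖t‖ ≤ ∑ k, |t k| := by
      refine (pi_norm_le_iff_of_nonneg (by positivity)).mpr fun i => ?_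
      rw [Real.norm_eq_abs]
      exact Finset.single_le_sum (fun j _ => abs_nonneg (t j)) (Finset.mem_univ i)
    calc |h t - g t| = ‖t‖ * |h u - g u| := by
          rw [hhu, hgu, ← mul_sub, abs_mul, abs_of_pos hc]
      _ ≤ ‖t‖ * ε := by nlinarith [abs_nonneg (h u - g u)]
      _ ≤ ε * ∑ k, |t k| := by nlinarith

end Aux

/-- Let `T : X → Y` be a lattice homomorphism between Archimedean vector
lattices each admitting a positively homogeneous continuous function calculus (`Φ` on `X`,
`Ψ` on `Y`). Then `T (h(x_1,…,x_m)) = h(T x_1, …, T x_m)` for every `m`, `h ∈ ℋ_m` and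
`x_1, …, x_m ∈ X`. -/
theorem lattice_hom_commutes_with_function_calculus
    {X Y : Type*}
    [Lattice X] [AddCommGroup X] [Module ℝ X]
    [CovariantClass X X (· + ·) (· ≤ ·)] [PosSMulMono ℝ X]
    [Lattice Y] [AddCommGroup Y] [Module ℝ Y]
    [CovariantClass Y Y (· + ·) (· ≤ ·)] [PosSMulMono ℝ Y]
    (harchX : ∀ x y : X, (∀ n : ℕ, n • x ≤ y) → x ≤ 0)
    (harchY : ∀ x y : Y, (∀ n : ℕ, n • x ≤ y) → x ≤ 0)
    (T : X →ₗ[ℝ] Y) (hT : ∀ a b : X, T (a ⊔ b) = T a ⊔ T b)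
    -- the positively homogeneous continuous function calculus on `X`
    (Φ : ∀ m : ℕ, (Fin m → X) → ((Fin m → ℝ) → ℝ) → X)
    (hΦadd : ∀ (m) (x : Fin m → X) (h g), IsPHC h → IsPHC g →
      Φ m x (h + g) = Φ m x h + Φ m x g)
    (hΦsmul : ∀ (m) (x : Fin m → X) (c : ℝ) (h), IsPHC h → Φ m x (c • h) = c • Φ m x h)
    (hΦsup : ∀ (m) (x : Fin m → X) (h g), IsPHC h → IsPHC g →
      Φ m x (h ⊔ g) = Φ m x h ⊔ Φ m x g)
    (hΦproj : ∀ (m) (x : Fin m → X) (k : Fin m), Φ m x (fun t => t k) = x k)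
    -- the positively homogeneous continuous function calculus on `Y`
    (Ψ : ∀ m : ℕ, (Fin m → Y) → ((Fin m → ℝ) → ℝ) → Y)
    (hΨadd : ∀ (m) (y : Fin m → Y) (h g), IsPHC h → IsPHC g →
      Ψ m y (h + g) = Ψ m y h + Ψ m y g)
    (hΨsmul : ∀ (m) (y : Fin m → Y) (c : ℝ) (h), IsPHC h → Ψ m y (c • h) = c • Ψ m y h)
    (hΨsup : ∀ (m) (y : Fin m → Y) (h g), IsPHC h → IsPHC g →
      Ψ m y (h ⊔ g) = Ψ m y h ⊔ Ψ m y g)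
    (hΨproj : ∀ (m) (y : Fin m → Y) (k : Fin m), Ψ m y (fun t => t k) = y k) :
    ∀ (m : ℕ) (h : (Fin m → ℝ) → ℝ) (x : Fin m → X), IsPHC h →
      T (Φ m x h) = Ψ m (fun k => T (x k)) h := by
  intro m h x hh
  set y : Fin m → Y := fun k => T (x k) with hy
  -- monotonicity of T
  have Tmono : ∀ a b : X, a ≤ b → T a ≤ T b := by
    intro a b hab
    have h1 := hT a b
    rw [sup_eq_right.mpr hab] at h1
    exact sup_eq_right.mp h1.symm
  -- monotonicity of Φ, Ψ on PHC functions
  have Φmono : ∀ f g, IsPHC f → IsPHC g → (∀ t, f t ≤ g t) → Φ m x f ≤ Φ m x g := by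
    intro f g hf hg hle
    have hfg : f ⊔ g = g := funext fun t => sup_eq_right.mpr (hle t)
    have h1 := hΦsup m x f g hf hg
    rw [hfg] at h1
    exact sup_eq_right.mp h1.symm
  have Ψmono : ∀ f g, IsPHC f → IsPHC g → (∀ t, f t ≤ g t) → Ψ m y f ≤ Ψ m y g := by
    intro f g hf hg hle
    have hfg : f ⊔ g = g := funext fun t => sup_eq_right.mpr (hle t)
    have h1 := hΨsup m y f g hf hg
    rw [hfg] at h1
    exact sup_eq_right.mp h1.symm
  -- values at zero
  have Φ0 : Φ m x 0 = 0 := by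
    have h1 := hΦsmul m x 0 0 isPHC_zero
    rwa [zero_smul, zero_smul] at h1
  have Ψ0 : Ψ m y 0 = 0 := by
    have h1 := hΨsmul m y 0 0 isPHC_zero
    rwa [zero_smul, zero_smul] at h1
  -- subtraction formulas
  have Φsub : ∀ f g, IsPHC f → IsPHC g → Φ m x (f - g) = Φ m x f - Φ m x g := by
    intro f g hf hg
    have e : f - g = f + (-1 : ℝ) • g := by rw [neg_one_smul, sub_eq_add_neg]
    rw [e, hΦadd m x _ _ hf (hg.smul _), hΦsmul m x _ _ hg, neg_one_smul,
      ← sub_eq_add_neg]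
  have Ψsub : ∀ f g, IsPHC f → IsPHC g → Ψ m y (f - g) = Ψ m y f - Ψ m y g := by
    intro f g hf hg
    have e : f - g = f + (-1 : ℝ) • g := by rw [neg_one_smul, sub_eq_add_neg]
    rw [e, hΨadd m y _ _ hf (hg.smul _), hΨsmul m y _ _ hg, neg_one_smul,
      ← sub_eq_add_neg]
  -- T ∘ Φ and Ψ ∘ (T ∘ x) agree on the sublattice generated by projections
  have key : ∀ f, InLat m f → T (Φ m x f) = Ψ m y f := by
    intro f hf
    induction hf with
    | zero => rw [Φ0, Ψ0, map_zero]
    | proj k => rw [hΦproj, hΨproj]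
    | @add f' g' hf' hg' ihf ihg =>
        rw [hΦadd m x _ _ hf'.isPHC hg'.isPHC, map_add, ihf, ihg,
          hΨadd m y _ _ hf'.isPHC hg'.isPHC]
    | @smul c f' hf' ih =>
        rw [hΦsmul m x _ _ hf'.isPHC, map_smul, ih, hΨsmul m y _ _ hf'.isPHC]
    | @sup f' g' hf' hg' ihf ihg =>
        rw [hΦsup m x _ _ hf'.isPHC hg'.isPHC, hT, ihf, ihg,
          hΨsup m y _ _ hf'.isPHC hg'.isPHC]
  -- the comparison element
  set N : (Fin m → ℝ) → ℝ := fun t => ∑ k, |t k| with hN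
  have hNI : InLat m N := inLat_sumAbs m
  have hNP : IsPHC N := hNI.isPHC
  set w : Y := T (Φ m x N) + Ψ m y N with hw
  set d : Y := T (Φ m x h) - Ψ m y h with hd
  have hbound : ∀ ε : ℝ, 0 < ε → d ≤ ε • w ∧ -d ≤ ε • w := by
    intro ε hε
    obtain ⟨g, hgI, hge⟩ := inLat_approx m h hh hε
    have hgP := hgI.isPHC
    have hεN : IsPHC (ε • N) := hNP.smul ε
    have e1 : T (Φ m x (h - g)) ≤ ε • T (Φ m x N) := by
      have hle : ∀ t, (h - g) t ≤ (ε • N) t := by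
        intro t
        have := hge t
        have h2 : h t - g t ≤ ε * N t := le_trans (le_abs_self _) this
        simpa [Pi.sub_apply, Pi.smul_apply, smul_eq_mul] using h2
      have h3 := Φmono (h - g) (ε • N) (hh.sub hgP) hεN hle
      rw [hΦsmul m x ε N hNP] at h3
      have h4 := Tmono _ _ h3
      rwa [map_smul] at h4
    have e1' : T (Φ m x (g - h)) ≤ ε • T (Φ m x N) := by
      have hle : ∀ t, (g - h) t ≤ (ε • N) t := by
        intro t
        have := hge t
        have h2 : g t - h t ≤ ε * N t := by
          have := neg_abs_le (h t - g t)
          linarith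
        simpa [Pi.sub_apply, Pi.smul_apply, smul_eq_mul] using h2
      have h3 := Φmono (g - h) (ε • N) (hgP.sub hh) hεN hle
      rw [hΦsmul m x ε N hNP] at h3
      have h4 := Tmono _ _ h3
      rwa [map_smul] at h4
    have e2 : Ψ m y (g - h) ≤ ε • Ψ m y N := by
      have hle : ∀ t, (g - h) t ≤ (ε • N) t := by
        intro t
        have := hge t
        have h2 : g t - h t ≤ ε * N t := by
          have := neg_abs_le (h t - g t)
          linarith
        simpa [Pi.sub_apply, Pi.smul_apply, smul_eq_mul] using h2
      have h3 := Ψmono (g - h) (ε • N) (hgP.sub hh) hεN hle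
      rwa [hΨsmul m y ε N hNP] at h3
    have e2' : Ψ m y (h - g) ≤ ε • Ψ m y N := by
      have hle : ∀ t, (h - g) t ≤ (ε • N) t := by
        intro t
        have := hge t
        have h2 : h t - g t ≤ ε * N t := le_trans (le_abs_self _) this
        simpa [Pi.sub_apply, Pi.smul_apply, smul_eq_mul] using h2
      have h3 := Ψmono (h - g) (ε • N) (hh.sub hgP) hεN hle
      rwa [hΨsmul m y ε N hNP] at h3
    have hdec : d = T (Φ m x (h - g)) + Ψ m y (g - h) := by
      rw [hd, Φsub _ _ hh hgP, Ψsub _ _ hgP hh, map_sub, key g hgI]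
      abel
    have hdec' : -d = T (Φ m x (g - h)) + Ψ m y (h - g) := by
      rw [hd, Φsub _ _ hgP hh, Ψsub _ _ hh hgP, map_sub, key g hgI]
      abel
    constructor
    · rw [hdec, hw, smul_add]
      exact add_le_add e1 e2
    · rw [hdec', hw, smul_add]
      exact add_le_add e1' e2'
  have hw0 : (0 : Y) ≤ w := by
    obtain ⟨h1, h2⟩ := hbound 1 one_pos
    rw [one_smul] at h1 h2
    have h3 : (0 : Y) ≤ w + w := by
      have := add_le_add h1 h2
      simpa using this
    have h4 := smul_le_smul_of_nonneg_left h3 (by norm_num : (0:ℝ) ≤ 2⁻¹)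
    rw [smul_zero] at h4
    have h5 : (2⁻¹ : ℝ) • (w + w) = w := by
      rw [smul_add, ← add_smul]
      norm_num
    rwa [h5] at h4
  have harch : ∀ z : Y, (∀ ε : ℝ, 0 < ε → z ≤ ε • w) → z ≤ 0 := by
    intro z hz
    apply harchY z w
    intro n
    cases n with
    | zero => simpa using hw0
    | succ k =>
        have hp : (0:ℝ) < ((k+1 : ℕ) : ℝ) := by exact_mod_cast Nat.succ_pos k
        have hb := hz (((k+1 : ℕ) : ℝ))⁻¹ (by positivity)
        have h1 := smul_le_smul_of_nonneg_left hb hp.le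
        rw [smul_smul, mul_inv_cancel₀ (ne_of_gt hp), one_smul,
          Nat.cast_smul_eq_nsmul] at h1
        exact h1
  have hd1 : d ≤ 0 := harch d fun ε hε => (hbound ε hε).1
  have hd2 : -d ≤ 0 := harch (-d) fun ε hε => (hbound ε hε).2
  have : d = 0 := le_antisymm hd1 (neg_nonpos.mp hd2)
  rw [hd] at this
  exact sub_eq_zero.mp this
end

section
/- Let E be a real Banach space and 1 ≤ q ≤ p < ∞. Then (H_{p,q}[E], ‖·‖_{p,q}) is complete: every Cauchy sequence in H_{p,q}[E] with respect to ‖·‖_{p,q} converges in ‖·‖_{p,q} to an element of H_{p,q}[E]. -/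
open scoped ENNReal

open Filter Topology

/-- A function `f : E* → ℝ` is positively homogeneous. -/
def PosHomog {E : Type*} [NormedAddCommGroup E] [NormedSpace ℝ E]
    (f : (E →L[ℝ] ℝ) → ℝ) : Prop :=
  ∀ (c : ℝ), 0 ≤ c → ∀ φ : E →L[ℝ] ℝ, f (c • φ) = c * f φ

/-- The weak `q`-summing norm of a finite family in `E*`. -/
noncomputable def weakSumNorm {E : Type*} [NormedAddCommGroup E] [NormedSpace ℝ E]
    (q : ℝ) {n : ℕ} (xs : Fin n → (E →L[ℝ] ℝ)) : ℝ :=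
  sSup ((fun x : E => (∑ k, |xs k x| ^ q) ^ (1 / q)) '' Metric.closedBall 0 1)

/-- The `(p,q)`-summing norm of `f : E* → ℝ`, with values in `[0,∞]`. -/
noncomputable def pqNorm {E : Type*} [NormedAddCommGroup E] [NormedSpace ℝ E]
    (p q : ℝ) (f : (E →L[ℝ] ℝ) → ℝ) : ℝ≥0∞ :=
  ⨆ (n : ℕ) (xs : Fin n → (E →L[ℝ] ℝ)) (_ : weakSumNorm q xs ≤ 1),
    ENNReal.ofReal ((∑ k, |f (xs k)| ^ p) ^ (1 / p))

lemma pqNorm_ge {E : Type*} [NormedAddCommGroup E] [NormedSpace ℝ E]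
    (p q : ℝ) (f : (E →L[ℝ] ℝ) → ℝ) {n : ℕ} (xs : Fin n → (E →L[ℝ] ℝ))
    (h : weakSumNorm q xs ≤ 1) :
    ENNReal.ofReal ((∑ k, |f (xs k)| ^ p) ^ (1 / p)) ≤ pqNorm p q f :=
  le_iSup_of_le n (le_iSup_of_le xs (le_iSup_of_le h le_rfl))

lemma weakSumNorm_single {E : Type*} [NormedAddCommGroup E] [NormedSpace ℝ E]
    (q : ℝ) (hq : 1 ≤ q) (φ : E →L[ℝ] ℝ) (hφ : ‖φ‖ ≤ 1) :
    weakSumNorm q ![φ] ≤ 1 := by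
  apply Real.sSup_le _ zero_le_one
  rintro y ⟨x, hx, rfl⟩
  simp only [Fin.sum_univ_one, Matrix.cons_val_zero]
  rw [one_div, Real.rpow_rpow_inv (abs_nonneg _) (by linarith)]
  calc |φ x| = ‖φ x‖ := (Real.norm_eq_abs _).symm
    _ ≤ ‖φ‖ * ‖x‖ := φ.le_opNorm x
    _ ≤ 1 * 1 := by
        apply mul_le_mul hφ _ (norm_nonneg _) zero_le_one
        simpa [Metric.mem_closedBall, dist_zero_right] using hx
    _ = 1 := one_mul 1

lemma abs_le_pqNorm {E : Type*} [NormedAddCommGroup E] [NormedSpace ℝ E]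
    (p q : ℝ) (hp : 1 ≤ p) (hq : 1 ≤ q) (f : (E →L[ℝ] ℝ) → ℝ)
    (φ : E →L[ℝ] ℝ) (hφ : ‖φ‖ ≤ 1) :
    ENNReal.ofReal |f φ| ≤ pqNorm p q f := by
  have h := pqNorm_ge p q f ![φ] (weakSumNorm_single q hq φ hφ)
  simpa [Fin.sum_univ_one, one_div,
    Real.rpow_rpow_inv (abs_nonneg _) (by linarith : p ≠ 0)] using h

/-- For `1 ≤ q ≤ p < ∞`, the space `(H_{p,q}[E], ‖·‖_{p,q})` is
complete: every `‖·‖_{p,q}`-Cauchy sequence in `H_{p,q}[E]` converges in `‖·‖_{p,q}` to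
an element of `H_{p,q}[E]`. -/
theorem Hpq_complete
    (E : Type*) [NormedAddCommGroup E] [NormedSpace ℝ E] [CompleteSpace E]
    (p q : ℝ) (hq : 1 ≤ q) (hqp : q ≤ p)
    (f : ℕ → (E →L[ℝ] ℝ) → ℝ)
    (hmem : ∀ j, PosHomog (f j) ∧ pqNorm p q (f j) < ⊤)
    (hcauchy : ∀ ε : ℝ, 0 < ε → ∃ N : ℕ, ∀ j ≥ N, ∀ k ≥ N,
      pqNorm p q (fun φ => f j φ - f k φ) < ENNReal.ofReal ε) :
    ∃ g : (E →L[ℝ] ℝ) → ℝ, PosHomog g ∧ pqNorm p q g < ⊤ ∧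
      ∀ ε : ℝ, 0 < ε → ∃ N : ℕ, ∀ j ≥ N,
        pqNorm p q (fun φ => f j φ - g φ) < ENNReal.ofReal ε := by
  have hp : 1 ≤ p := hq.trans hqp
  -- values at 0 vanish
  have hzero : ∀ j, f j 0 = 0 := by
    intro j
    have := (hmem j).1 0 le_rfl 0
    simpa using this
  -- key pointwise estimate
  have key : ∀ (j k : ℕ) (φ : E →L[ℝ] ℝ) (ε : ℝ), 0 < ε →
      pqNorm p q (fun ψ => f j ψ - f k ψ) < ENNReal.ofReal ε →
      |f j φ - f k φ| ≤ ‖φ‖ * ε := by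
    intro j k φ ε hε hlt
    rcases eq_or_ne φ 0 with rfl | hφ0
    · simp [hzero]
    · set ψ := ‖φ‖⁻¹ • φ with hψ
      have hφpos : (0:ℝ) < ‖φ‖ := norm_pos_iff.2 hφ0
      have hψnorm : ‖ψ‖ ≤ 1 := by
        have h : ‖ψ‖ = ‖(‖φ‖⁻¹ : ℝ)‖ * ‖φ‖ := by
          rw [hψ]; exact norm_smul ‖φ‖⁻¹ φ
        rw [h, Real.norm_eq_abs, abs_of_pos (inv_pos.2 hφpos),
          inv_mul_cancel₀ hφpos.ne']
      have h1 : ENNReal.ofReal |f j ψ - f k ψ| ≤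
          pqNorm p q (fun ψ => f j ψ - f k ψ) :=
        abs_le_pqNorm p q hp hq _ ψ hψnorm
      have h2 : |f j ψ - f k ψ| < ε :=
        (ENNReal.ofReal_lt_ofReal_iff hε).mp (h1.trans_lt hlt)
      have hrec : ∀ m : ℕ, f m φ = ‖φ‖ * f m ψ := by
        intro m
        have := (hmem m).1 ‖φ‖ (norm_nonneg φ) ψ
        rwa [hψ, smul_smul, mul_inv_cancel₀ hφpos.ne', one_smul] at this
      rw [hrec j, hrec k, ← mul_sub, abs_mul, abs_of_nonneg (norm_nonneg φ)]
      exact mul_le_mul_of_nonneg_left h2.le (norm_nonneg φ)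
  -- pointwise Cauchy
  have hcs : ∀ φ : E →L[ℝ] ℝ, CauchySeq (fun j => f j φ) := by
    intro φ
    rw [Metric.cauchySeq_iff]
    intro ε hε
    have hε' : 0 < ε / (‖φ‖ + 1) := by positivity
    obtain ⟨N, hN⟩ := hcauchy _ hε'
    refine ⟨N, fun j hj k hk => ?_⟩
    have := key j k φ _ hε' (hN j hj k hk)
    rw [Real.dist_eq]
    calc |f j φ - f k φ| ≤ ‖φ‖ * (ε / (‖φ‖ + 1)) := this
      _ < (‖φ‖ + 1) * (ε / (‖φ‖ + 1)) :=
          mul_lt_mul_of_pos_right (lt_add_one _) hε'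
      _ = ε := by field_simp
  have hlim : ∀ φ : E →L[ℝ] ℝ, ∃ L, Tendsto (fun j => f j φ) atTop (𝓝 L) :=
    fun φ => cauchySeq_tendsto_of_complete (hcs φ)
  set g : (E →L[ℝ] ℝ) → ℝ := fun φ => (hlim φ).choose with hgdef
  have hg : ∀ φ, Tendsto (fun j => f j φ) atTop (𝓝 (g φ)) :=
    fun φ => (hlim φ).choose_spec
  -- g is positively homogeneous
  have hgh : PosHomog g := by
    intro c hc φ
    have h1 : Tendsto (fun j => f j (c • φ)) atTop (𝓝 (g (c • φ))) := hg _
    have h2 : Tendsto (fun j => f j (c • φ)) atTop (𝓝 (c * g φ)) := by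
      have : (fun j => f j (c • φ)) = fun j => c * f j φ := by
        funext j; exact (hmem j).1 c hc φ
      rw [this]
      exact (hg φ).const_mul c
    exact tendsto_nhds_unique h1 h2
  -- main estimate
  have est : ∀ (ε : ℝ), 0 < ε → ∀ N : ℕ,
      (∀ j ≥ N, ∀ k ≥ N,
        pqNorm p q (fun φ => f j φ - f k φ) < ENNReal.ofReal ε) →
      ∀ j ≥ N, pqNorm p q (fun φ => f j φ - g φ) ≤ ENNReal.ofReal ε := by
    intro ε hε N hN j hj
    refine iSup_le fun n => iSup_le fun xs => iSup_le fun hxs => ?_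
    apply ENNReal.ofReal_le_ofReal
    have hto : Tendsto (fun k => (∑ i, |f j (xs i) - f k (xs i)| ^ p) ^ (1 / p))
        atTop (𝓝 ((∑ i, |f j (xs i) - g (xs i)| ^ p) ^ (1 / p))) := by
      apply Tendsto.rpow_const
      · apply tendsto_finset_sum
        intro i _
        exact (((hg (xs i)).const_sub _).abs).rpow_const
          (Or.inr (le_trans zero_le_one hp))
      · right; positivity
    refine le_of_tendsto hto (eventually_atTop.2 ⟨N, fun k hk => ?_⟩)
    have h1 := pqNorm_ge p q (fun φ => f j φ - f k φ) xs hxs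
    exact ((ENNReal.ofReal_lt_ofReal_iff hε).mp (h1.trans_lt (hN j hj k hk))).le
  refine ⟨g, hgh, ?_, ?_⟩
  · -- finiteness of pqNorm g
    obtain ⟨N, hN⟩ := hcauchy 1 one_pos
    have hNg : pqNorm p q (fun φ => f N φ - g φ) ≤ ENNReal.ofReal 1 :=
      est 1 one_pos N hN N le_rfl
    have htri : pqNorm p q g ≤ pqNorm p q (f N) +
        pqNorm p q (fun φ => f N φ - g φ) := by
      refine iSup_le fun n => iSup_le fun xs => iSup_le fun hxs => ?_
      have hmink : (∑ i, |g (xs i)| ^ p) ^ (1 / p) ≤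
          (∑ i, |f N (xs i)| ^ p) ^ (1 / p) +
          (∑ i, |f N (xs i) - g (xs i)| ^ p) ^ (1 / p) := by
        have := Real.Lp_add_le (Finset.univ (α := Fin n))
          (fun i => f N (xs i)) (fun i => g (xs i) - f N (xs i)) hp
        simp only [add_sub_cancel] at this
        refine this.trans (add_le_add le_rfl ?_)
        apply Real.rpow_le_rpow (by positivity) _ (by positivity)
        apply Finset.sum_le_sum
        intro i _
        rw [abs_sub_comm]
      calc ENNReal.ofReal ((∑ i, |g (xs i)| ^ p) ^ (1 / p)) ≤
            ENNReal.ofReal ((∑ i, |f N (xs i)| ^ p) ^ (1 / p) +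
              (∑ i, |f N (xs i) - g (xs i)| ^ p) ^ (1 / p)) :=
          ENNReal.ofReal_le_ofReal hmink
        _ ≤ ENNReal.ofReal ((∑ i, |f N (xs i)| ^ p) ^ (1 / p)) +
            ENNReal.ofReal ((∑ i, |f N (xs i) - g (xs i)| ^ p) ^ (1 / p)) :=
          ENNReal.ofReal_add_le
        _ ≤ pqNorm p q (f N) + pqNorm p q (fun φ => f N φ - g φ) :=
          add_le_add (pqNorm_ge p q (f N) xs hxs)
            (pqNorm_ge p q (fun φ => f N φ - g φ) xs hxs)
    calc pqNorm p q g ≤ pqNorm p q (f N) + pqNorm p q (fun φ => f N φ - g φ) := htri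
      _ ≤ pqNorm p q (f N) + ENNReal.ofReal 1 := add_le_add le_rfl hNg
      _ < ⊤ := ENNReal.add_lt_top.2 ⟨(hmem N).2, ENNReal.ofReal_lt_top⟩
  · -- convergence
    intro ε hε
    obtain ⟨N, hN⟩ := hcauchy (ε / 2) (by positivity)
    refine ⟨N, fun j hj => ?_⟩
    calc pqNorm p q (fun φ => f j φ - g φ) ≤ ENNReal.ofReal (ε / 2) :=
        est (ε / 2) (by positivity) N hN j hj
      _ < ENNReal.ofReal ε :=
        (ENNReal.ofReal_lt_ofReal_iff hε).mpr (half_lt_self hε)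
end
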